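/- Every theorem of NRA_{m,n} is valid on every (m,n)-accessible N-frame (soundness of NRA_{m,n}). -/

import Mathlib

inductive Formula : Type
  | bot : Formula
  | var : ℕ → Formula
  | neg : Formula → Formula
  | or : Formula → Formula → Formula
  | box : Formula → Formula
  deriving DecidableEq

namespace Formula

def imp (φ ψ : Formula) : Formula := .or (.neg φ) ψ

def and (φ ψ : Formula) : Formula := .neg (.or (.neg φ) (.neg ψ))

/-- □^n φ -/
def boxn : ℕ → Formula → Formula
  | 0, φ => φ
  | k+1, φ => .box (boxn k φ)

/-- the set of subformulas -/
def sub : Formula → Finset Formula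
  | .bot => {.bot}
  | .var p => {.var p}
  | .neg φ => insert (.neg φ) φ.sub
  | .or φ ψ => insert (.or φ ψ) (φ.sub ∪ ψ.sub)
  | .box φ => insert (.box φ) φ.sub

/-- ∼ρ -/
def negg : Formula → Formula
  | .neg φ => φ
  | φ => .neg φ

end Formula

def NSub (ψ : Formula) : Finset Formula := ψ.sub ∪ ψ.sub.image Formula.negg

/-- boolean evaluation treating boxed formulas and variables as atoms -/
def evalP (v : Formula → Bool) : Formula → Bool
  | .bot => false
  | .var p => v (.var p)
  | .neg φ => !(evalP v φ)
  | .or φ ψ => evalP v φ || evalP v ψ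
  | .box φ => v (.box φ)

/-- propositional tautologies in the modal language -/
def Tautology (φ : Formula) : Prop := ∀ v, evalP v φ = true

/-- Provability in NA_{m,n} (ros = false) and NRA_{m,n} (ros = true):
    propositional tautologies, the scheme □^n φ → □^m φ, modus ponens,
    necessitation, and (if ros) the rule Ros^□ : ¬□φ / ¬□□φ. -/
inductive Prov (m n : ℕ) (ros : Bool) : Formula → Prop
  | taut {φ} : Tautology φ → Prov m n ros φ
  | axA (φ) : Prov m n ros ((Formula.boxn n φ).imp (Formula.boxn m φ))
  | mp {φ ψ} : Prov m n ros (φ.imp ψ) → Prov m n ros φ → Prov m n ros ψ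
  | nec {φ} : Prov m n ros φ → Prov m n ros (.box φ)
  | ros {φ} : ros = true → Prov m n ros (.neg (.box φ)) →
      Prov m n ros (.neg (.box (.box φ)))

/-- An N-frame on world set W: a binary relation R_φ for each formula φ. -/
abbrev NFrame (W : Type) := Formula → W → W → Prop

structure NModel (W : Type) where
  Rel : NFrame W
  V : W → ℕ → Prop

/-- satisfaction in an N-model -/
def Sat {W : Type} (M : NModel W) : W → Formula → Prop
  | _, .bot => False
  | w, .var p => M.V w p
  | w, .neg φ => ¬ Sat M w φ
  | w, .or φ ψ => Sat M w φ ∨ Sat M w ψ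
  | w, .box φ => ∀ w', M.Rel φ w w' → Sat M w' φ

/-- x R_φ^k y : there is a φ-path of length k from x to y -/
def FPath {W : Type} (R : NFrame W) (φ : Formula) : ℕ → W → W → Prop
  | 0, x, y => x = y
  | k+1, x, y => ∃ w, R (Formula.boxn k φ) x w ∧ FPath R φ k w y

/-- (m,n)-accessibility for φ -/
def AccFor {W : Type} (R : NFrame W) (m n : ℕ) (φ : Formula) : Prop :=
  ∀ x y, FPath R φ m x y → FPath R φ n x y

/-- Γ-(m,n)-accessibility -/
def SubAcc {W : Type} (R : NFrame W) (m n : ℕ) (Γ : Finset Formula) : Prop :=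
  ∀ φ, Formula.boxn m φ ∈ Γ → AccFor R m n φ

/-- (m,n)-accessibility -/
def Accessible {W : Type} (R : NFrame W) (m n : ℕ) : Prop :=
  ∀ φ, AccFor R m n φ

def ValidM {W : Type} (M : NModel W) (ψ : Formula) : Prop := ∀ w, Sat M w ψ

def ValidF {W : Type} (R : NFrame W) (ψ : Formula) : Prop :=
  ∀ V : W → ℕ → Prop, ValidM ⟨R, V⟩ ψ



section Soundness

/-- number of leading boxes -/
def fdepth : Formula → ℕ
  | .box φ => fdepth φ + 1
  | _ => 0

lemma fdepth_boxn (k : ℕ) (ψ : Formula) : fdepth (Formula.boxn k ψ) = k + fdepth ψ := by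
  induction k with
  | zero => simp [Formula.boxn]
  | succ k ih => simp only [Formula.boxn, fdepth, ih]; omega

lemma strip_boxes : ∀ (k : ℕ) (χ : Formula), k ≤ fdepth χ → ∃ ψ, Formula.boxn k ψ = χ := by
  intro k
  induction k with
  | zero => exact fun χ _ => ⟨χ, rfl⟩
  | succ k ih =>
    intro χ h
    match χ with
    | .bot | .var _ | .neg _ | .or _ _ => simp [fdepth] at h
    | .box χ' =>
      obtain ⟨ψ, hψ⟩ := ih χ' (by simp [fdepth] at h; omega)
      exact ⟨ψ, by simp [Formula.boxn, hψ]⟩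

lemma sat_boxn {W : Type} (M : NModel W) (φ : Formula) :
    ∀ (k : ℕ) (w : W),
      Sat M w (Formula.boxn k φ) ↔ ∀ y, FPath M.Rel φ k w y → Sat M y φ := by
  intro k
  induction k with
  | zero =>
    intro w
    constructor
    · rintro h y rfl; exact h
    · intro h; exact h w rfl
  | succ k ih =>
    intro w
    constructor
    · rintro h y ⟨u, hu, hp⟩
      exact (ih u).1 (h u hu) y hp
    · intro h u hu
      exact (ih u).2 fun y hp => h y ⟨u, hu, hp⟩

lemma taut_sat {W : Type} (M : NModel W) (w : W) {φ : Formula} (h : Tautology φ) :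
    Sat M w φ := by
  classical
  let v : Formula → Bool := fun χ => decide (Sat M w χ)
  have key : ∀ ρ, evalP v ρ = true ↔ Sat M w ρ := by
    intro ρ
    induction ρ with
    | bot => simp [evalP, Sat]
    | var p => simp [evalP, Sat, v]; exact decide_eq_true_iff
    | neg ψ ih => simp [evalP, Sat, ← ih]
    | or ψ χ ih1 ih2 => simp [evalP, Sat, ih1, ih2]
    | box ψ _ => simp [evalP, v]
  exact (key φ).1 (h v)

lemma sat_imp {W : Type} (M : NModel W) (w : W) (φ ψ : Formula) :
    Sat M w (φ.imp ψ) ↔ (Sat M w φ → Sat M w ψ) := by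
  show (¬ Sat M w φ ∨ Sat M w ψ) ↔ _
  tauto

end Soundness

theorem stmt10 (m n : ℕ) (ψ : Formula) (h : Prov m n true ψ) :
    ∀ (W : Type) [Nonempty W] (R : NFrame W),
      Accessible R m n → ValidF R ψ := by
  induction h with
  | @taut φ ht =>
    intro W _ R _ V w
    exact taut_sat _ w ht
  | axA φ =>
    intro W _ R hacc V w
    rw [sat_imp]
    intro hn
    rw [sat_boxn] at hn ⊢
    intro y hy
    exact hn y (hacc φ w y hy)
  | @mp φ χ h1 h2 ih1 ih2 =>
    intro W _ R hacc V w
    exact (sat_imp _ w φ χ).1 (ih1 W R hacc V w) (ih2 W R hacc V w)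
  | @nec φ h ih =>
    intro W _ R hacc V w
    intro w' _
    exact ih W R hacc V w'
  | @ros φ _ _ ih =>
    intro W _ R hacc V w
    by_cases hm : 1 ≤ m
    · -- empty frame contradicts the IH
      exfalso
      have hacc0 : Accessible (fun (_ : Formula) (_ _ : Unit) => False) m n := by
        intro χ x y hp
        obtain ⟨k, rfl⟩ : ∃ k, m = k + 1 := ⟨m - 1, by omega⟩
        obtain ⟨u, hu, -⟩ := hp
        exact hu.elim
      have := ih Unit (fun _ _ _ => False) hacc0 (fun _ _ => True) ()
      exact this (fun u hu => hu.elim)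
    · have hm0 : m = 0 := by omega
      subst hm0
      by_cases hn : n = 0
      · -- all frames accessible; empty frame contradicts the IH
        exfalso
        subst hn
        have hacc0 : Accessible (fun (_ : Formula) (_ _ : Unit) => False) 0 0 :=
          fun χ x y hp => hp
        have := ih Unit (fun _ _ _ => False) hacc0 (fun _ _ => True) ()
        exact this (fun u hu => hu.elim)
      · obtain ⟨n', rfl⟩ : ∃ n', n = n' + 1 := ⟨n - 1, by omega⟩
        by_cases hd : n' ≤ fdepth φ + 1
        · -- direct argument: R_{□φ} is serial by accessibility
          obtain ⟨ρ, hρ⟩ := strip_boxes n' (.box φ) (by simp [fdepth]; omega)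
          have hpath : FPath R ρ (n' + 1) w w := hacc ρ w w rfl
          obtain ⟨u, hu, -⟩ := hpath
          rw [hρ] at hu
          intro hb
          exact ih W R hacc V u (hb u hu)
        · -- counterexample frame on Bool contradicts the IH
          exfalso
          set R1 : NFrame Bool := fun χ x y => ¬(x = true ∧ χ = φ) with hR1
          have edge_false : ∀ χ (y : Bool), R1 χ false y := by
            intro χ y; simp [hR1]
          have tail : ∀ (χ : Formula) (k : ℕ) (x : Bool), FPath R1 χ (k + 1) false x := by
            intro χ k
            induction k with
            | zero => intro x; exact ⟨x, edge_false _ x, rfl⟩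
            | succ k ih => intro x; exact ⟨false, edge_false _ false, ih x⟩
          have hacc1 : Accessible R1 0 (n' + 1) := by
            rintro χ x y rfl
            obtain ⟨k, rfl⟩ : ∃ k, n' = k + 1 := ⟨n' - 1, by omega⟩
            refine ⟨false, ?_, tail χ k x⟩
            simp only [hR1, not_and]
            rintro rfl hbox
            have := fdepth_boxn (k + 1) χ
            rw [hbox] at this
            omega
          have hsat : Sat ⟨R1, fun _ _ => True⟩ true (.box φ) := by
            intro u hu
            exact absurd ⟨rfl, rfl⟩ hu
          exact ih Bool R1 hacc1 (fun _ _ => True) true hsat
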